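/- Suppose a graph G has the (a, n/2, ρ)-expansion-property for some ρ ∈ (0,1], where n = |V(G)|. Then for all vertex sets X, Y ⊆ V(G) with |X|, |Y| ≥ x ≥ 2a and every W ⊆ V(G) with |W| ≤ ρx/4, there exists a path in G − W connecting X and Y of length at most 10·ρ^{-1}·log(n/x). -/

import Mathlib

open Finset SimpleGraph
open scoped Classical

variable {V : Type*}

/-- Number of ordered adjacent pairs inside `S` (= sum of degrees in the induced subgraph). -/
noncomputable def degSum [Fintype V] (G : SimpleGraph V) (S : Finset V) : ℕ :=
  ((S ×ˢ S).filter fun p => G.Adj p.1 p.2).card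

/-- Average degree of the subgraph of `G` induced on `S`. -/
noncomputable def avgDegOn [Fintype V] (G : SimpleGraph V) (S : Finset V) : ℝ :=
  (degSum G S : ℝ) / (S.card : ℝ)

/-- Average degree of `G`. -/
noncomputable def avgDeg [Fintype V] (G : SimpleGraph V) : ℝ :=
  avgDegOn G Finset.univ

/-- `cruxSize α G` is the minimum order of a subgraph of `G` with average degree at least
`α · d(G)` (equivalently, of a vertex set inducing such a subgraph). -/
noncomputable def cruxSize [Fintype V] (α : ℝ) (G : SimpleGraph V) : ℕ :=
  sInf {m | ∃ S : Finset V, S.card = m ∧ α * avgDeg G ≤ avgDegOn G S}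

/-- Number of edges between `S` and its complement (counted as ordered pairs from `S` out). -/
noncomputable def crossPairs [Fintype V] (G : SimpleGraph V) (S : Finset V) : ℕ :=
  ((S ×ˢ Sᶜ).filter fun p => G.Adj p.1 p.2).card

/-- External neighbourhood of `A` in the graph `G − D`. -/
noncomputable def nbhdIn [Fintype V] (G : SimpleGraph V) (D A : Finset V) : Finset V :=
  Finset.univ.filter fun v => v ∉ D ∧ v ∉ A ∧ ∃ u ∈ A, G.Adj u v

/-- Ball of radius `r` around `A` in the graph `G − D`. -/
noncomputable def ballIn [Fintype V] (G : SimpleGraph V) (D A : Finset V) : ℕ → Finset V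
  | 0 => A
  | r + 1 => ballIn G D A r ∪ nbhdIn G D (ballIn G D A r)

/-- `G` has the `(a, b, ρ)`-expansion-property. -/
def ExpansionProperty [Fintype V] (G : SimpleGraph V) (a b ρ : ℝ) : Prop :=
  ∀ X : Finset V, a ≤ (X.card : ℝ) → (X.card : ℝ) ≤ b →
    ρ * (X.card : ℝ) ≤ ((nbhdIn G ∅ X).card : ℝ)

/-- The Komlós–Szemerédi expansion rate function. -/
noncomputable def rho (ε k x : ℝ) : ℝ :=
  if k / 5 ≤ x then ε / (Real.log (15 * x / k)) ^ 2 else 0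

/-- `(ε, k)`-robust-expander. -/
def RobustExpander [Fintype V] (G : SimpleGraph V) (ε k : ℝ) : Prop :=
  ∀ X : Finset V, k / 2 ≤ (X.card : ℝ) → (X.card : ℝ) ≤ (Fintype.card V : ℝ) / 2 →
    ∀ F : Finset (Sym2 V), ↑F ⊆ G.edgeSet →
      (F.card : ℝ) ≤ avgDeg G * rho ε k (X.card : ℝ) * (X.card : ℝ) →
      rho ε k (X.card : ℝ) * (X.card : ℝ) ≤ ((nbhdIn (G.deleteEdges ↑F) ∅ X).card : ℝ)

/-- `G` contains a subdivision of the graph `H` (on vertex set `Fin t`): there are `t` distinct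
core vertices and internally vertex-disjoint paths for the edges of `H`, whose internal
vertices avoid the cores. -/
def ContainsSubdivision {t : ℕ} (H : SimpleGraph (Fin t)) (G : SimpleGraph V) : Prop :=
  ∃ c : Fin t ↪ V, ∃ p : ∀ i j : Fin t, i < j → H.Adj i j → G.Walk (c i) (c j),
    (∀ i j (h : i < j) (ha : H.Adj i j), (p i j h ha).IsPath) ∧
    (∀ i j (h : i < j) (ha : H.Adj i j) (k : Fin t),
        c k ∈ (p i j h ha).support → k = i ∨ k = j) ∧
    (∀ i j (h : i < j) (ha : H.Adj i j) i' j' (h' : i' < j') (ha' : H.Adj i' j'),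
        (i, j) ≠ (i', j') →
        Disjoint ((p i j h ha).support.toFinset \ {c i, c j})
          ((p i' j' h' ha').support.toFinset \ {c i', c j'}))

/-- `G` contains a copy of `H` as a subgraph. -/
def ContainsCopy {W₀ : Type*} (H : SimpleGraph W₀) (G : SimpleGraph V) : Prop :=
  ∃ f : W₀ → V, Function.Injective f ∧ ∀ a b, H.Adj a b → G.Adj (f a) (f b)

/-- Clique number of `G`. -/
noncomputable def cliqueNumber [Fintype V] (G : SimpleGraph V) : ℕ :=
  sSup {n | ∃ s : Finset V, G.IsNClique n s}

lemma mem_nbhdIn [Fintype V] {G : SimpleGraph V} {D A : Finset V} {v : V} :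
    v ∈ nbhdIn G D A ↔ v ∉ D ∧ v ∉ A ∧ ∃ u ∈ A, G.Adj u v := by
  simp [nbhdIn]

lemma ballIn_succ [Fintype V] (G : SimpleGraph V) (D A : Finset V) (r : ℕ) :
    ballIn G D A (r+1) = ballIn G D A r ∪ nbhdIn G D (ballIn G D A r) := rfl

lemma ballIn_succ_subset [Fintype V] (G : SimpleGraph V) (D A : Finset V) (r : ℕ) :
    ballIn G D A r ⊆ ballIn G D A (r+1) := Finset.subset_union_left

lemma ballIn_avoid [Fintype V] (G : SimpleGraph V) (D A : Finset V)
    (hA : ∀ v ∈ A, v ∉ D) : ∀ r, ∀ v ∈ ballIn G D A r, v ∉ D := by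
  intro r
  induction r with
  | zero => exact hA
  | succ r ih =>
    intro v hv
    rw [ballIn_succ, Finset.mem_union] at hv
    rcases hv with hv | hv
    · exact ih v hv
    · exact (mem_nbhdIn.mp hv).1

lemma ballIn_reach [Fintype V] (G : SimpleGraph V) (D A : Finset V) :
    ∀ r, ∀ z ∈ ballIn G D A r, ∃ u ∈ A, ∃ p : G.Walk u z,
      p.length ≤ r ∧ ∀ w ∈ p.support, w ∈ ballIn G D A r := by
  intro r
  induction r with
  | zero =>
    intro z hz
    exact ⟨z, hz, Walk.nil, by simp, by intro w hw; simp at hw; subst hw; exact hz⟩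
  | succ r ih =>
    intro z hz
    rw [ballIn_succ, Finset.mem_union] at hz
    rcases hz with hz | hz
    · obtain ⟨u, hu, p, hlen, hsupp⟩ := ih z hz
      exact ⟨u, hu, p, hlen.trans (Nat.le_succ r),
        fun w hw => ballIn_succ_subset G D A r (hsupp w hw)⟩
    · obtain ⟨-, -, u', hu', hadj⟩ := mem_nbhdIn.mp hz
      obtain ⟨u, hu, p, hlen, hsupp⟩ := ih u' hu'
      refine ⟨u, hu, p.concat hadj, ?_, ?_⟩
      · rw [Walk.length_concat]; omega
      · intro w hw
        rw [Walk.support_concat, List.mem_append] at hw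
        rcases hw with hw | hw
        · exact ballIn_succ_subset G D A r (hsupp w hw)
        · simp at hw; subst hw
          rw [ballIn_succ]
          exact Finset.mem_union_right _ hz

lemma growth_step [Fintype V] {G : SimpleGraph V} {a ρ : ℝ} (hρ0 : 0 < ρ)
    (hG : ExpansionProperty G a ((Fintype.card V : ℝ) / 2) ρ)
    {W S : Finset V} {x : ℝ} (hx0 : 0 ≤ x)
    (hSx : x/2 ≤ (S.card:ℝ)) (hSa : a ≤ (S.card:ℝ))
    (hSn : (S.card:ℝ) ≤ (Fintype.card V:ℝ)/2)
    (hW : (W.card:ℝ) ≤ ρ * x/4) :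
    (1+ρ/2) * (S.card:ℝ) ≤ ((S ∪ nbhdIn G W S).card : ℝ) := by
  have hdisj : Disjoint S (nbhdIn G W S) := by
    rw [Finset.disjoint_right]
    intro v hv
    exact fun hvS => (mem_nbhdIn.mp hv).2.1 hvS
  have hcard : ((S ∪ nbhdIn G W S).card : ℝ) = S.card + (nbhdIn G W S).card := by
    rw [Finset.card_union_of_disjoint hdisj]; push_cast; ring
  have hsub : nbhdIn G ∅ S \ W ⊆ nbhdIn G W S := by
    intro v hv
    rw [Finset.mem_sdiff] at hv
    obtain ⟨hv1, hv2⟩ := hv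
    obtain ⟨-, h2, h3⟩ := mem_nbhdIn.mp hv1
    exact mem_nbhdIn.mpr ⟨hv2, h2, h3⟩
  have h1 : ((nbhdIn G ∅ S).card : ℝ) - W.card ≤ ((nbhdIn G W S).card : ℝ) := by
    have ha' : ((nbhdIn G ∅ S).card:ℝ) ≤ ((nbhdIn G ∅ S \ W).card:ℝ) + W.card :=
      by exact_mod_cast Finset.card_le_card_sdiff_add_card (s := nbhdIn G ∅ S) (t := W)
    have hb' : ((nbhdIn G ∅ S \ W).card:ℝ) ≤ ((nbhdIn G W S).card:ℝ) :=
      by exact_mod_cast Finset.card_le_card hsub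
    linarith
  have h2 := hG S hSa hSn
  rw [hcard]
  nlinarith

lemma ball_big [Fintype V] {G : SimpleGraph V} {a ρ x : ℝ} {W A : Finset V}
    (hρ0 : 0 < ρ) (ha : 0 < a)
    (hG : ExpansionProperty G a ((Fintype.card V : ℝ)/2) ρ)
    (hx : 2*a ≤ x) (hW : (W.card:ℝ) ≤ ρ*x/4)
    (hA : 3*x/4 ≤ (A.card:ℝ)) :
    ∀ r, (Fintype.card V:ℝ)/2 < ((ballIn G W A r).card:ℝ) ∨
      (3*x/4) * (1+ρ/2)^r ≤ ((ballIn G W A r).card:ℝ) := by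
  have hx0 : 0 < x := by linarith
  intro r
  induction r with
  | zero => right; simpa [ballIn] using hA
  | succ r ih =>
    have hmono : ((ballIn G W A r).card:ℝ) ≤ ((ballIn G W A (r+1)).card:ℝ) := by
      exact_mod_cast Finset.card_le_card (ballIn_succ_subset G W A r)
    rcases ih with h | h
    · left; linarith
    · by_cases hn : ((ballIn G W A r).card:ℝ) ≤ (Fintype.card V:ℝ)/2
      · have hpow : (1:ℝ) ≤ (1+ρ/2)^r := one_le_pow₀ (by linarith)
        have hball : 3*x/4 ≤ ((ballIn G W A r).card:ℝ) := by nlinarith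
        have hgrow := growth_step hρ0 hG (le_of_lt hx0)
          (by linarith : x/2 ≤ ((ballIn G W A r).card:ℝ))
          (by linarith : a ≤ ((ballIn G W A r).card:ℝ)) hn hW
        right
        rw [ballIn_succ]
        calc (3*x/4) * (1+ρ/2)^(r+1) = (1+ρ/2) * ((3*x/4) * (1+ρ/2)^r) := by ring
          _ ≤ (1+ρ/2) * ((ballIn G W A r).card:ℝ) := by nlinarith
          _ ≤ _ := hgrow
      · left; linarith

set_option maxHeartbeats 2000000 in
/-- short paths between large sets avoiding a small set, in a graph with the
`(a, n/2, ρ)`-expansion-property. -/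
theorem statement_11 [Fintype V] (G : SimpleGraph V) (a ρ : ℝ)
    (hρ0 : 0 < ρ) (hρ1 : ρ ≤ 1) (ha : 0 < a)
    (hG : ExpansionProperty G a ((Fintype.card V : ℝ) / 2) ρ)
    (X Y W : Finset V) (x : ℝ) (hx : 2 * a ≤ x)
    (hX : x ≤ (X.card : ℝ)) (hY : x ≤ (Y.card : ℝ))
    (hW : (W.card : ℝ) ≤ ρ * x / 4) :
    ∃ (u v : V) (p : G.Walk u v), u ∈ X ∧ v ∈ Y ∧ p.IsPath ∧
      (∀ w ∈ p.support, w ∉ W) ∧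
      (p.length : ℝ) ≤ 10 * ρ⁻¹ * Real.log ((Fintype.card V : ℝ) / x) := by
  classical
  set n : ℝ := (Fintype.card V : ℝ) with hn
  have hx0 : 0 < x := by linarith
  have hW4 : (W.card:ℝ) ≤ x/4 := by nlinarith
  have hW4 : (W.card:ℝ) ≤ x/4 := by nlinarith
  have hXn : (X.card:ℝ) ≤ n := by
    rw [hn]; exact_mod_cast Finset.card_le_univ X
  have hxn : x ≤ n := le_trans hX hXn
  set L := Real.log (n / x) with hL
  have hL0 : 0 ≤ L := Real.log_nonneg ((one_le_div hx0).mpr hxn)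
  set r₀ := ⌊5 * ρ⁻¹ * L⌋₊ with hr₀
  have hρinv : 0 < ρ⁻¹ := inv_pos.mpr hρ0
  have hy0 : 0 ≤ 5 * ρ⁻¹ * L := by positivity
  have hc : ρ/3 ≤ Real.log (1+ρ/2) := by
    have h1 : Real.log ((1+ρ/2)⁻¹) ≤ (1+ρ/2)⁻¹ - 1 :=
      Real.log_le_sub_one_of_pos (by positivity)
    rw [Real.log_inv] at h1
    have hinv : (1+ρ/2) * (1+ρ/2)⁻¹ = 1 := mul_inv_cancel₀ (by positivity)
    have h2 : (1+ρ/2)⁻¹ ≤ 1 - ρ/3 := by nlinarith [inv_pos.mpr (show (0:ℝ) < 1+ρ/2 by linarith)]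
    linarith
  have hkey : n/2 < (3*x/4) * (1+ρ/2)^r₀ := by
    have he : ((1:ℝ)+ρ/2)^r₀ = Real.exp ((r₀:ℝ) * Real.log (1+ρ/2)) := by
      rw [Real.exp_nat_mul, Real.exp_log (by positivity)]
    have hr1 : 5*ρ⁻¹*L - 1 < (r₀:ℝ) := Nat.sub_one_lt_floor _
    have hstep1 : (5*ρ⁻¹*L - 1) * (ρ/3) ≤ (r₀:ℝ) * Real.log (1+ρ/2) := by
      have ha1 : (5*ρ⁻¹*L - 1) * (ρ/3) ≤ (r₀:ℝ) * (ρ/3) := by nlinarith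
      have ha2 : (r₀:ℝ) * (ρ/3) ≤ (r₀:ℝ) * Real.log (1+ρ/2) :=
        mul_le_mul_of_nonneg_left hc (Nat.cast_nonneg _)
      linarith
    have heq : (5*ρ⁻¹*L - 1) * (ρ/3) = 5*L/3 - ρ/3 := by
      field_simp
    have h53 : 5*L/3 - 1/3 ≤ (r₀:ℝ) * Real.log (1+ρ/2) := by
      rw [heq] at hstep1; linarith
    have hexp : Real.exp (5*L/3 - 1/3) ≤ ((1:ℝ)+ρ/2)^r₀ := by
      rw [he]; exact Real.exp_le_exp.mpr h53
    have hlog23 : Real.log (2/3) < -(1/3 : ℝ) := by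
      have := Real.log_lt_sub_one_of_pos (x := (2/3:ℝ)) (by norm_num) (by norm_num)
      linarith
    have h23 : (2:ℝ)/3 < Real.exp (2*L/3 - 1/3) := by
      calc (2:ℝ)/3 = Real.exp (Real.log (2/3)) := (Real.exp_log (by norm_num)).symm
        _ < Real.exp (2*L/3 - 1/3) := Real.exp_lt_exp.mpr (by linarith)
    have hnpos : 0 < n / x := div_pos (lt_of_lt_of_le hx0 hxn) hx0
    have hnx : n = Real.exp L * x := by
      rw [hL, Real.exp_log hnpos, div_mul_cancel₀ _ (ne_of_gt hx0)]
    have hsplit : Real.exp (5*L/3 - 1/3) = Real.exp L * Real.exp (2*L/3 - 1/3) := by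
      rw [← Real.exp_add]; ring_nf
    have hexpL : 0 < Real.exp L := Real.exp_pos _
    have hmain : n/2 < (3*x/4) * Real.exp (5*L/3 - 1/3) := by
      rw [hnx, hsplit]
      have h4 : Real.exp L * x / 2 = (3*x/4) * (Real.exp L * (2/3)) := by ring
      rw [h4]
      exact mul_lt_mul_of_pos_left (mul_lt_mul_of_pos_left h23 hexpL)
        (by linarith : (0:ℝ) < 3*x/4)
    nlinarith [hexp, hmain, hx0]
  have hAX : 3*x/4 ≤ ((X \ W).card:ℝ) := by
    have h1 : (X.card:ℝ) ≤ ((X\W).card:ℝ) + W.card := by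
      exact_mod_cast Finset.card_le_card_sdiff_add_card
    linarith
  have hAY : 3*x/4 ≤ ((Y \ W).card:ℝ) := by
    have h1 : (Y.card:ℝ) ≤ ((Y\W).card:ℝ) + W.card := by
      exact_mod_cast Finset.card_le_card_sdiff_add_card
    linarith
  have hBx : n/2 < ((ballIn G W (X\W) r₀).card:ℝ) := by
    rcases ball_big hρ0 ha hG hx hW hAX r₀ with h | h
    · exact h
    · linarith
  have hBy : n/2 < ((ballIn G W (Y\W) r₀).card:ℝ) := by
    rcases ball_big hρ0 ha hG hx hW hAY r₀ with h | h
    · exact h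
    · linarith
  have hinter : (ballIn G W (X\W) r₀ ∩ ballIn G W (Y\W) r₀).Nonempty := by
    rw [← Finset.card_pos]
    by_contra hemp
    push_neg at hemp
    have hz : (ballIn G W (X\W) r₀ ∩ ballIn G W (Y\W) r₀).card = 0 := Nat.le_zero.mp hemp
    have hcu := Finset.card_union_add_card_inter (ballIn G W (X\W) r₀) (ballIn G W (Y\W) r₀)
    rw [hz, Nat.add_zero] at hcu
    have hle : ((ballIn G W (X\W) r₀ ∪ ballIn G W (Y\W) r₀).card : ℝ) ≤ n := by
      rw [hn]; exact_mod_cast Finset.card_le_univ _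
    have : ((ballIn G W (X\W) r₀).card:ℝ) + ((ballIn G W (Y\W) r₀).card:ℝ)
        = ((ballIn G W (X\W) r₀ ∪ ballIn G W (Y\W) r₀).card : ℝ) := by exact_mod_cast hcu.symm
    linarith
  obtain ⟨z, hzmem⟩ := hinter
  rw [Finset.mem_inter] at hzmem
  obtain ⟨u, hu, p, hplen, hpsupp⟩ := ballIn_reach G W (X\W) r₀ z hzmem.1
  obtain ⟨v, hv, q, hqlen, hqsupp⟩ := ballIn_reach G W (Y\W) r₀ z hzmem.2
  refine ⟨u, v, (p.append q.reverse).bypass, (Finset.mem_sdiff.mp hu).1,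
    (Finset.mem_sdiff.mp hv).1, Walk.bypass_isPath _, ?_, ?_⟩
  · intro w hw
    have hw' := Walk.support_bypass_subset _ hw
    rw [Walk.mem_support_append_iff] at hw'
    rcases hw' with hw' | hw'
    · exact ballIn_avoid G W (X\W) (fun v hv => (Finset.mem_sdiff.mp hv).2) r₀ w (hpsupp w hw')
    · rw [Walk.support_reverse, List.mem_reverse] at hw'
      exact ballIn_avoid G W (Y\W) (fun v hv => (Finset.mem_sdiff.mp hv).2) r₀ w (hqsupp w hw')
  · have h1 := Walk.length_bypass_le (p.append q.reverse)
    rw [Walk.length_append, Walk.length_reverse] at h1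
    have hlen : ((p.append q.reverse).bypass.length : ℝ) ≤ (r₀:ℝ) + r₀ := by
      exact_mod_cast le_trans h1 (Nat.add_le_add hplen hqlen)
    have hfl : (r₀:ℝ) ≤ 5*ρ⁻¹*L := Nat.floor_le hy0
    linarith
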